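/- Let M_1, …, M_{j−1} be n×n complex matrices and let D_{a_1}, …, D_{a_j} be n×n diagonal matrices with diagonal entries given by vectors a_1, …, a_j ∈ ℂ^n. Let p, q ∈ [1, ∞] with 1/p + 1/q = 1, and for each i set C_{M_i,q} = max_k ‖M_i(k)‖_{ℓ^q}, where M_i(k) is the k-th row of M_i. Then for all vectors u, v ∈ ℂ^n, |uᵀ D_{a_1} M_1 D_{a_2} ⋯ M_{j−1} D_{a_j} v| ≤ ‖a_1‖_{ℓ^p} ⋯ ‖a_j‖_{ℓ^p} · C_{M_1,q} ⋯ C_{M_{j−1},q} · ‖u‖_{ℓ^q} · ‖v‖_{ℓ^∞}. -/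

import Mathlib

/- STATEMENT 1: For n×n complex matrices `M_1, …, M_{j-1}` and diagonal matrices with
diagonals `a_1, …, a_j` (here `j = m + 1`), and conjugate exponents `p, q ∈ [1, ∞]`,
`|uᵀ D_{a_1} M_1 D_{a_2} ⋯ M_{j-1} D_{a_j} v| ≤
  ‖a_1‖_p ⋯ ‖a_j‖_p · C_{M_1,q} ⋯ C_{M_{j-1},q} · ‖u‖_q · ‖v‖_∞`. -/

open scoped ENNReal
open Matrix

/-- The ℓ^p norm of a finitely indexed family, `p ∈ [1, ∞]`. -/
noncomputable def lpNorm (p : ℝ≥0∞) {ι E : Type*} [Fintype ι] [SeminormedAddCommGroup E]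
    (f : ι → E) : ℝ :=
  if p = ∞ then ⨆ i, ‖f i‖ else (∑ i, ‖f i‖ ^ p.toReal) ^ (1 / p.toReal)

lemma lpNorm_nonneg (p : ℝ≥0∞) {ι E : Type*} [Fintype ι] [SeminormedAddCommGroup E]
    (f : ι → E) : 0 ≤ lpNorm p f := by
  unfold lpNorm
  split
  · exact Real.iSup_nonneg fun i => norm_nonneg _
  · exact Real.rpow_nonneg (Finset.sum_nonneg fun i _ => Real.rpow_nonneg (norm_nonneg _) _) _

lemma norm_le_lpNorm_top {ι E : Type*} [Fintype ι] [SeminormedAddCommGroup E]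
    (f : ι → E) (k : ι) : ‖f k‖ ≤ lpNorm ∞ f := by
  unfold lpNorm
  simp only [if_pos rfl]
  exact le_ciSup (f := fun i => ‖f i‖) (Set.Finite.bddAbove (Set.finite_range _)) k

lemma holder_pair {n : ℕ} {p q : ℝ≥0∞} (hp : 1 ≤ p) (hq : 1 ≤ q)
    (hpq : 1 / p + 1 / q = 1) (f g : Fin n → ℂ) :
    ∑ k, ‖f k‖ * ‖g k‖ ≤ lpNorm q f * lpNorm p g := by
  rcases eq_or_ne q ∞ with hq' | hq'
  · -- q = ∞, so p = 1
    have hp1 : p = 1 := by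
      rw [hq'] at hpq
      simp at hpq
      simpa using (ENNReal.inv_eq_one.mp (by simpa [one_div] using hpq))
    subst hp1; subst hq'
    have h1 : lpNorm (1 : ℝ≥0∞) g = ∑ k, ‖g k‖ := by
      simp [lpNorm]
    rw [h1]
    calc ∑ k, ‖f k‖ * ‖g k‖ ≤ ∑ k, lpNorm ∞ f * ‖g k‖ := by
          refine Finset.sum_le_sum fun k _ => ?_
          exact mul_le_mul_of_nonneg_right (norm_le_lpNorm_top f k) (norm_nonneg _)
      _ = lpNorm ∞ f * ∑ k, ‖g k‖ := by rw [Finset.mul_sum]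
  · rcases eq_or_ne p ∞ with hp' | hp'
    · -- p = ∞, so q = 1
      have hq1 : q = 1 := by
        rw [hp'] at hpq
        simp at hpq
        simpa using (ENNReal.inv_eq_one.mp (by simpa [one_div] using hpq))
      subst hq1; subst hp'
      have h1 : lpNorm (1 : ℝ≥0∞) f = ∑ k, ‖f k‖ := by
        simp [lpNorm]
      rw [h1]
      calc ∑ k, ‖f k‖ * ‖g k‖ ≤ ∑ k, ‖f k‖ * lpNorm ∞ g := by
            refine Finset.sum_le_sum fun k _ => ?_
            exact mul_le_mul_of_nonneg_left (norm_le_lpNorm_top g k) (norm_nonneg _)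
        _ = (∑ k, ‖f k‖) * lpNorm ∞ g := by rw [Finset.sum_mul]
    · -- both finite
      have hp0 : p ≠ 0 := by positivity
      have hq0 : q ≠ 0 := by positivity
      have hre : 1 / p.toReal + 1 / q.toReal = 1 := by
        have := congrArg ENNReal.toReal hpq
        rwa [ENNReal.toReal_add (by simp [one_div, hp0]) (by simp [one_div, hq0]),
          ENNReal.toReal_div, ENNReal.toReal_div, ENNReal.toReal_one] at this
      have hptr : 0 < p.toReal := ENNReal.toReal_pos hp0 hp'
      have hqtr : 0 < q.toReal := ENNReal.toReal_pos hq0 hq'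
      have hq1 : 1 < q.toReal := by
        by_contra h
        push_neg at h
        have : 1 ≤ 1 / q.toReal := by
          rw [le_div_iff₀ hqtr]; linarith
        have h2 : 0 < 1 / p.toReal := by positivity
        linarith
      have hconj : Real.HolderConjugate q.toReal p.toReal :=
        Real.holderConjugate_iff.mpr ⟨hq1, by rw [← one_div, ← one_div]; linarith⟩
      have := Real.inner_le_Lp_mul_Lq_of_nonneg (s := Finset.univ) hconj
        (f := fun k => ‖f k‖) (g := fun k => ‖g k‖)
        (fun i _ => norm_nonneg _) (fun i _ => norm_nonneg _)
      simpa [lpNorm, hp', hq'] using this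

lemma holder3 {n : ℕ} {p q : ℝ≥0∞} (hp : 1 ≤ p) (hq : 1 ≤ q)
    (hpq : 1 / p + 1 / q = 1) (f g h : Fin n → ℂ) :
    ‖∑ k, f k * (g k * h k)‖ ≤ lpNorm q f * lpNorm p g * lpNorm ∞ h := by
  calc ‖∑ k, f k * (g k * h k)‖ ≤ ∑ k, ‖f k * (g k * h k)‖ := norm_sum_le _ _
    _ = ∑ k, ‖f k‖ * ‖g k‖ * ‖h k‖ := by
        refine Finset.sum_congr rfl fun k _ => ?_
        rw [norm_mul, norm_mul]; ring
    _ ≤ ∑ k, ‖f k‖ * ‖g k‖ * lpNorm ∞ h := by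
        refine Finset.sum_le_sum fun k _ => ?_
        exact mul_le_mul_of_nonneg_left (norm_le_lpNorm_top h k)
          (mul_nonneg (norm_nonneg _) (norm_nonneg _))
    _ = (∑ k, ‖f k‖ * ‖g k‖) * lpNorm ∞ h := by rw [Finset.sum_mul]
    _ ≤ lpNorm q f * lpNorm p g * lpNorm ∞ h := by
        exact mul_le_mul_of_nonneg_right (holder_pair hp hq hpq f g) (lpNorm_nonneg _ _)

lemma lpNorm_top {ι E : Type*} [Fintype ι] [SeminormedAddCommGroup E] (f : ι → E) :
    lpNorm ∞ f = ⨆ i, ‖f i‖ := if_pos rfl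

lemma mulVec_top_bound {n : ℕ} {p q : ℝ≥0∞} (hp : 1 ≤ p) (hq : 1 ≤ q)
    (hpq : 1 / p + 1 / q = 1) (M : Matrix (Fin n) (Fin n) ℂ) (a v : Fin n → ℂ) :
    lpNorm ∞ (M *ᵥ (Matrix.diagonal a *ᵥ v)) ≤
      (⨆ k, lpNorm q (M k)) * lpNorm p a * lpNorm ∞ v := by
  have hR : 0 ≤ (⨆ k, lpNorm q (M k)) * lpNorm p a * lpNorm ∞ v :=
    mul_nonneg (mul_nonneg (Real.iSup_nonneg fun k => lpNorm_nonneg _ _)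
      (lpNorm_nonneg _ _)) (lpNorm_nonneg _ _)
  rw [lpNorm_top]
  refine Real.iSup_le (fun k => ?_) hR
  have hd : Matrix.diagonal a *ᵥ v = fun j => a j * v j :=
    funext fun j => Matrix.mulVec_diagonal a v j
  have hk : (M *ᵥ (Matrix.diagonal a *ᵥ v)) k = ∑ j, M k j * (a j * v j) := by
    rw [hd]; simp [Matrix.mulVec, dotProduct]
  rw [hk]
  calc ‖∑ j, M k j * (a j * v j)‖ ≤ lpNorm q (M k) * lpNorm p a * lpNorm ∞ v :=
        holder3 hp hq hpq _ _ _
    _ ≤ (⨆ k, lpNorm q (M k)) * lpNorm p a * lpNorm ∞ v := by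
        refine mul_le_mul_of_nonneg_right (mul_le_mul_of_nonneg_right ?_ (lpNorm_nonneg _ _))
          (lpNorm_nonneg _ _)
        exact le_ciSup (f := fun k => lpNorm q (M k))
          (Set.Finite.bddAbove (Set.finite_range _)) k

theorem diagonal_matrix_multilinear_bound {n m : ℕ} (p q : ℝ≥0∞) (hp : 1 ≤ p) (hq : 1 ≤ q)
    (hpq : 1 / p + 1 / q = 1) (M : Fin m → Matrix (Fin n) (Fin n) ℂ)
    (a : Fin (m + 1) → Fin n → ℂ) (u v : Fin n → ℂ) :
    ‖u ⬝ᵥ ((Matrix.diagonal (a 0) *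
        (List.ofFn fun i : Fin m => M i * Matrix.diagonal (a i.succ)).prod) *ᵥ v)‖ ≤
      (∏ i, lpNorm p (a i)) * (∏ i, ⨆ k, lpNorm q (M i k)) * lpNorm q u * lpNorm ∞ v := by
  induction m generalizing v with
  | zero =>
    simp only [List.ofFn_zero, List.prod_nil, mul_one]
    have hd : Matrix.diagonal (a 0) *ᵥ v = fun j => a 0 j * v j :=
      funext fun j => Matrix.mulVec_diagonal (a 0) v j
    have h1 : u ⬝ᵥ (Matrix.diagonal (a 0) *ᵥ v) = ∑ k, u k * (a 0 k * v k) := by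
      rw [hd]; simp [dotProduct]
    rw [h1]
    have h2 := holder3 hp hq hpq u (a 0) v
    calc ‖∑ k, u k * (a 0 k * v k)‖ ≤ lpNorm q u * lpNorm p (a 0) * lpNorm ∞ v := h2
      _ = (∏ i, lpNorm p (a i)) * (∏ i : Fin 0, ⨆ k, lpNorm q (M i k)) *
            lpNorm q u * lpNorm ∞ v := by
          rw [Fin.prod_univ_one, Fin.prod_univ_zero]; ring
  | succ m ih =>
    set a' : Fin (m + 1) → Fin n → ℂ := fun i => a i.castSucc with ha'
    set M' : Fin m → Matrix (Fin n) (Fin n) ℂ := fun i => M i.castSucc with hM'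
    set v' : Fin n → ℂ :=
      M (Fin.last m) *ᵥ (Matrix.diagonal (a (Fin.last m).succ) *ᵥ v) with hv'def
    have hlist : (List.ofFn fun i : Fin (m + 1) => M i * Matrix.diagonal (a i.succ)).prod
        = (List.ofFn fun i : Fin m => M' i * Matrix.diagonal (a' i.succ)).prod *
          (M (Fin.last m) * Matrix.diagonal (a (Fin.last m).succ)) := by
      rw [List.ofFn_succ', List.prod_concat]
      congr 1
    have hvec : (Matrix.diagonal (a 0) *
          (List.ofFn fun i : Fin (m + 1) => M i * Matrix.diagonal (a i.succ)).prod) *ᵥ v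
        = (Matrix.diagonal (a' 0) *
          (List.ofFn fun i : Fin m => M' i * Matrix.diagonal (a' i.succ)).prod) *ᵥ v' := by
      rw [hlist, hv'def]
      have h0 : a' 0 = a 0 := by simp [ha']
      rw [h0, Matrix.mulVec_mulVec, Matrix.mulVec_mulVec]
      simp only [mul_assoc]
    rw [hvec]
    have hbound := ih M' a' v'
    have hv' : lpNorm ∞ v' ≤ (⨆ k, lpNorm q (M (Fin.last m) k)) *
        lpNorm p (a (Fin.last m).succ) * lpNorm ∞ v :=
      mulVec_top_bound hp hq hpq _ _ _
    have hA : 0 ≤ ∏ i, lpNorm p (a' i) := Finset.prod_nonneg fun i _ => lpNorm_nonneg _ _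
    have hB : 0 ≤ ∏ i, ⨆ k, lpNorm q (M' i k) :=
      Finset.prod_nonneg fun i _ => Real.iSup_nonneg fun k => lpNorm_nonneg _ _
    have hC : 0 ≤ lpNorm q u := lpNorm_nonneg _ _
    have hsplit1 : (∏ i, lpNorm p (a i))
        = (∏ i, lpNorm p (a' i)) * lpNorm p (a (Fin.last m).succ) := by
      rw [Fin.prod_univ_castSucc]
      simp [ha', Fin.succ_last]
    have hsplit2 : (∏ i, ⨆ k, lpNorm q (M i k))
        = (∏ i, ⨆ k, lpNorm q (M' i k)) * (⨆ k, lpNorm q (M (Fin.last m) k)) := by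
      rw [Fin.prod_univ_castSucc]
    refine hbound.trans ?_
    calc (∏ i, lpNorm p (a' i)) * (∏ i, ⨆ k, lpNorm q (M' i k)) * lpNorm q u * lpNorm ∞ v'
        ≤ (∏ i, lpNorm p (a' i)) * (∏ i, ⨆ k, lpNorm q (M' i k)) * lpNorm q u *
            ((⨆ k, lpNorm q (M (Fin.last m) k)) * lpNorm p (a (Fin.last m).succ) *
              lpNorm ∞ v) :=
          mul_le_mul_of_nonneg_left hv' (mul_nonneg (mul_nonneg hA hB) hC)
      _ = (∏ i, lpNorm p (a i)) * (∏ i, ⨆ k, lpNorm q (M i k)) * lpNorm q u * lpNorm ∞ v := by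
          rw [hsplit1, hsplit2]; ring
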